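/- (Uniform-Gronwall-type estimate with integrally small perturbation of the decay rate, used in (4.82)–(4.83).) Let τ ≤ T be real numbers and let a, ξ, C_ξ be constants with a > ξ ≥ 0 and C_ξ ≥ 0. Let y : ℝ → ℝ be nonnegative and differentiable on [τ,T], let h : ℝ → ℝ be nonnegative and integrable on [τ,T] with ∫_s^t h(r) dr ≤ ξ(t−s) + C_ξ for all τ ≤ s ≤ t ≤ T, and let F : ℝ → ℝ be nonnegative and continuous on [τ,T]. If y'(s) ≤ −(a − h(s))·y(s) + F(s) for every s ∈ [τ,T], then for every t ∈ [τ,T], y(t) ≤ exp(C_ξ)·[exp(−(a−ξ)(t−τ))·y(τ) + ∫_τ^t exp(−(a−ξ)(t−s))·F(s) ds]. -/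

import Mathlib

open MeasureTheory Set intervalIntegral

private lemma exp_neg_quad (x : ℝ) (hx : 0 ≤ x) : Real.exp (-x) ≤ 1 - x + x^2 := by
  have h1 : x + 1 ≤ Real.exp x := Real.add_one_le_exp x
  have h2 : Real.exp (-x) * Real.exp x = 1 := by rw [← Real.exp_add]; simp
  nlinarith [Real.exp_pos (-x), Real.exp_pos x]

set_option maxHeartbeats 2000000 in
/-- Uniform-Gronwall-type estimate with integrally small perturbation of the
decay rate. -/
theorem stmt_9 (τ T : ℝ) (hτT : τ ≤ T) (a ξ Cξ : ℝ)
    (haξ : ξ < a) (hξ : 0 ≤ ξ) (hCξ : 0 ≤ Cξ)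
    (y y' h F : ℝ → ℝ)
    (hy_nonneg : ∀ s ∈ Icc τ T, 0 ≤ y s)
    (hy : ∀ s ∈ Icc τ T, HasDerivAt y (y' s) s)
    (hh_nonneg : ∀ s ∈ Icc τ T, 0 ≤ h s)
    (hh_int : IntegrableOn h (Icc τ T))
    (hh_bound : ∀ s t : ℝ, τ ≤ s → s ≤ t → t ≤ T → (∫ r in s..t, h r) ≤ ξ*(t-s) + Cξ)
    (hF_nonneg : ∀ s ∈ Icc τ T, 0 ≤ F s)
    (hF_cont : ContinuousOn F (Icc τ T))
    (hineq : ∀ s ∈ Icc τ T, y' s ≤ -(a - h s) * y s + F s) :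
    ∀ t ∈ Icc τ T,
      y t ≤ Real.exp Cξ * (Real.exp (-(a-ξ)*(t-τ)) * y τ
        + ∫ s in τ..t, Real.exp (-(a-ξ)*(t-s)) * F s) := by
  have hy_cont : ContinuousOn y (Icc τ T) :=
    fun s hs => ((hy s hs).continuousAt).continuousWithinAt
  set Y : ℝ → ℝ := fun s => Real.exp (a*s) * y s with hYdef
  set f : ℝ → ℝ := fun s => Real.exp (a*s) * F s with hfdef
  set φ : ℝ → ℝ := fun s => h s * Y s + f s with hφdef
  have hexp_cont : ContinuousOn (fun s : ℝ => Real.exp (a*s)) (Icc τ T) :=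
    (Real.continuous_exp.comp (continuous_const.mul continuous_id)).continuousOn
  have hY_cont : ContinuousOn Y (Icc τ T) := hexp_cont.mul hy_cont
  have hf_cont : ContinuousOn f (Icc τ T) := hexp_cont.mul hF_cont
  have hf_nonneg : ∀ s ∈ Icc τ T, 0 ≤ f s := fun s hs =>
    mul_nonneg (Real.exp_pos _).le (hF_nonneg s hs)
  have hY_nonneg : ∀ s ∈ Icc τ T, 0 ≤ Y s := fun s hs =>
    mul_nonneg (Real.exp_pos _).le (hy_nonneg s hs)
  have hφ_nonneg : ∀ s ∈ Icc τ T, 0 ≤ φ s := fun s hs =>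
    add_nonneg (mul_nonneg (hh_nonneg s hs) (hY_nonneg s hs)) (hf_nonneg s hs)
  have hφ_int : IntegrableOn φ (Icc τ T) :=
    (hh_int.mul_continuousOn hY_cont isCompact_Icc).add
      (hf_cont.integrableOn_compact isCompact_Icc)
  -- interval integrability helpers
  have hφ_ii : ∀ {p q : ℝ}, p ∈ Icc τ T → q ∈ Icc τ T → IntervalIntegrable φ volume p q := by
    intro p q hp hq
    exact (hφ_int.mono_set (uIcc_subset_Icc hp hq)).intervalIntegrable
  have hh_ii : ∀ {p q : ℝ}, p ∈ Icc τ T → q ∈ Icc τ T → IntervalIntegrable h volume p q := by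
    intro p q hp hq
    exact (hh_int.mono_set (uIcc_subset_Icc hp hq)).intervalIntegrable
  -- Step A : Y u ≤ Z u
  set Z : ℝ → ℝ := fun u => Y τ + ∫ s in τ..u, φ s with hZdef
  have hττ : τ ∈ Icc τ T := ⟨le_rfl, hτT⟩
  have stepA : ∀ u ∈ Icc τ T, Y u ≤ Z u := by
    intro u hu
    have key : Y u - Y τ ≤ ∫ s in τ..u, φ s := by
      refine sub_le_integral_of_hasDeriv_right_of_le hu.1
        (hY_cont.mono (Icc_subset_Icc le_rfl hu.2))
        (g' := fun s => Real.exp (a*s) * a * y s + Real.exp (a*s) * y' s)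
        ?_ ?_ ?_
      · intro x hx
        have hxI : x ∈ Icc τ T := ⟨hx.1.le, hx.2.le.trans hu.2⟩
        have hde : HasDerivAt (fun s : ℝ => Real.exp (a*s)) (Real.exp (a*x) * a) x := by
          exact ((Real.hasDerivAt_exp (a*x)).comp x ((hasDerivAt_id x).const_mul a)).congr_deriv (by simp)
        exact ((hde.mul (hy x hxI)).hasDerivWithinAt)
      · exact hφ_int.mono_set (Icc_subset_Icc le_rfl hu.2)
      · intro x hx
        have hxI : x ∈ Icc τ T := ⟨hx.1.le, hx.2.le.trans hu.2⟩
        have h2 : a * y x + y' x ≤ h x * y x + F x := by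
          have := hineq x hxI; linarith
        have h3 := mul_le_mul_of_nonneg_left h2 (Real.exp_pos (a*x)).le
        simp only [hφdef, hfdef, hYdef]
        linarith [h3]
    have : Z u = Y τ + ∫ s in τ..u, φ s := rfl
    linarith
  have hZτ : Z τ = Y τ := by simp [hZdef]
  have hZsub : ∀ {p q : ℝ}, p ∈ Icc τ T → q ∈ Icc τ T → p ≤ q →
      Z q - Z p = ∫ s in p..q, φ s := by
    intro p q hp hq _
    simpa [hZdef] using intervalIntegral.integral_interval_sub_left (hφ_ii hττ hq) (hφ_ii hττ hp)
  have hZmono : ∀ {p q : ℝ}, p ∈ Icc τ T → q ∈ Icc τ T → p ≤ q → Z p ≤ Z q := by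
    intro p q hp hq hpq
    have h0 : 0 ≤ ∫ s in p..q, φ s := by
      apply intervalIntegral.integral_nonneg hpq
      intro s hs
      exact hφ_nonneg s ⟨hp.1.trans hs.1, hs.2.trans hq.2⟩
    have := hZsub hp hq hpq
    linarith
  have hZnn : ∀ {p : ℝ}, p ∈ Icc τ T → 0 ≤ Z p := by
    intro p hp
    have := hZmono hττ hp hp.1
    have := hY_nonneg τ hττ
    rw [hZτ] at *
    linarith
  -- the function H and k
  set H : ℝ → ℝ := fun u => ∫ s in τ..u, h s with hHdef
  set k : ℝ → ℝ := fun u => Real.exp (-(H u)) with hkdef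
  have hHτ : H τ = 0 := by simp [hHdef]
  have hHsub : ∀ {p q : ℝ}, p ∈ Icc τ T → q ∈ Icc τ T →
      H q - H p = ∫ s in p..q, h s := by
    intro p q hp hq
    simpa [hHdef] using intervalIntegral.integral_interval_sub_left (hh_ii hττ hq) (hh_ii hττ hp)
  have hHmono : ∀ {p q : ℝ}, p ∈ Icc τ T → q ∈ Icc τ T → p ≤ q → H p ≤ H q := by
    intro p q hp hq hpq
    have h0 : 0 ≤ ∫ s in p..q, h s := by
      apply intervalIntegral.integral_nonneg hpq
      intro s hs
      exact hh_nonneg s ⟨hp.1.trans hs.1, hs.2.trans hq.2⟩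
    have := hHsub hp hq
    linarith
  have hHnn : ∀ {p : ℝ}, p ∈ Icc τ T → 0 ≤ H p := by
    intro p hp
    have := hHmono hττ hp hp.1
    rw [hHτ] at this; exact this
  have hkpos : ∀ u : ℝ, 0 < k u := fun u => Real.exp_pos _
  have hkle1 : ∀ {p : ℝ}, p ∈ Icc τ T → k p ≤ 1 := by
    intro p hp
    rw [hkdef]
    simpa using Real.exp_le_exp.2 (neg_nonpos.2 (hHnn hp))
  have hkmono : ∀ {p q : ℝ}, p ∈ Icc τ T → q ∈ Icc τ T → p ≤ q → k q ≤ k p := by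
    intro p q hp hq hpq
    exact Real.exp_le_exp.2 (neg_le_neg (hHmono hp hq hpq))
  -- continuity of Z, H, k on Icc τ T
  have hprim : ∀ {g : ℝ → ℝ}, IntegrableOn g (Icc τ T) →
      ContinuousOn (fun u => ∫ s in τ..u, g s) (Icc τ T) := by
    intro g hg
    have := continuousOn_primitive (f := g) (a := τ) (b := T) (μ := volume) hg
    apply this.congr
    intro x hx
    show (∫ s in τ..x, g s) = ∫ t in Ioc τ x, g t
    rw [intervalIntegral.integral_of_le hx.1]
  have hZcont : ContinuousOn Z (Icc τ T) := continuousOn_const.add (hprim hφ_int)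
  have hHcont : ContinuousOn H (Icc τ T) := hprim hh_int
  have hkcont : ContinuousOn k (Icc τ T) := Real.continuous_exp.comp_continuousOn hHcont.neg
  have hkτ1 : k τ = 1 := by simp [hkdef, hHτ]
  have hkratio : ∀ p q : ℝ, k q = k p * Real.exp (-(H q - H p)) := by
    intro p q
    simp only [hkdef, ← Real.exp_add]
    ring_nf
  clear_value Y f φ Z H k
  intro t ht
  have htI : t ∈ Icc τ T := ht
  have hIccsub : Icc τ t ⊆ Icc τ T := Icc_subset_Icc le_rfl ht.2
  have hfk_cont : ContinuousOn (fun s => f s * k s) (Icc τ T) := hf_cont.mul hkcont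
  have hfk_ii : ∀ {p q : ℝ}, p ∈ Icc τ T → q ∈ Icc τ T →
      IntervalIntegrable (fun s => f s * k s) volume p q := by
    intro p q hp hq
    exact (hfk_cont.mono (uIcc_subset_Icc hp hq)).intervalIntegrable
  -- Step B : the key Gronwall-type inequality
  have key : Z t * k t ≤ Z τ + ∫ s in τ..t, f s * k s := by
    rcases eq_or_lt_of_le ht.1 with heq | hlt
    · rw [← heq, hkτ1, mul_one]
      simp
    · refine le_of_forall_pos_le_add ?_
      intro ε hε
      set M : ℝ := (Z t - Z τ) + Z t * H t + 1 with hM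
      have hZτt : Z τ ≤ Z t := hZmono hττ htI ht.1
      have hMpos : 0 < M := by
        have h1 : 0 ≤ Z t := hZnn htI
        have h2 : 0 ≤ H t := hHnn htI
        have : 0 ≤ Z t * H t := mul_nonneg h1 h2
        rw [hM]; linarith
      set ε' : ℝ := ε / M with hε'
      have hε'pos : 0 < ε' := div_pos hε hMpos
      have hucont : UniformContinuousOn H (Icc τ t) :=
        isCompact_Icc.uniformContinuousOn_of_continuous (hHcont.mono hIccsub)
      obtain ⟨δ, hδpos, hδ⟩ := Metric.uniformContinuousOn_iff.1 hucont ε' hε'pos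
      obtain ⟨n, hn⟩ := exists_nat_gt ((t - τ)/δ)
      have htτ' : 0 < t - τ := by linarith
      have hnpos : 0 < (n:ℝ) := lt_of_le_of_lt (div_nonneg htτ'.le hδpos.le) hn
      set c : ℝ := (t - τ)/n with hc
      have hcpos : 0 < c := div_pos htτ' hnpos
      have hcδ : c < δ := by
        rw [hc, div_lt_iff₀ hnpos]
        rw [div_lt_iff₀ hδpos] at hn
        linarith
      set p : ℕ → ℝ := fun i => τ + i * c with hp
      have hp0 : p 0 = τ := by simp [hp]
      have hpn : p n = t := by
        rw [hp, hc]; field_simp; ring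
      have hpmono : ∀ i j : ℕ, i ≤ j → p i ≤ p j := by
        intro i j hij
        have hij' : (i:ℝ) ≤ j := Nat.cast_le.2 hij
        simp only [hp]
        have := mul_le_mul_of_nonneg_right hij' hcpos.le
        linarith
      have hpmem : ∀ i : ℕ, i ≤ n → p i ∈ Icc τ t := by
        intro i hi
        constructor
        · have : 0 ≤ (i:ℝ) * c := mul_nonneg (Nat.cast_nonneg i) hcpos.le
          simp only [hp]; linarith
        · calc p i ≤ p n := hpmono _ _ hi
            _ = t := hpn
      have hpdiff : ∀ i : ℕ, p (i+1) - p i = c := by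
        intro i; simp only [hp]; push_cast; ring
      -- per-interval estimate
      have step : ∀ i : ℕ, i < n →
          Z (p (i+1)) * k (p (i+1)) - Z (p i) * k (p i) ≤
            (∫ s in (p i)..(p (i+1)), f s * k s) + ε' * (Z (p (i+1)) - Z (p i))
              + Z t * ε' * (H (p (i+1)) - H (p i)) := by
        intro i hi
        set u := p i with hu'
        set v := p (i+1) with hv'
        have hu : u ∈ Icc τ t := hpmem i hi.le
        have hv : v ∈ Icc τ t := hpmem (i+1) hi
        have huv : u ≤ v := hpmono i (i+1) (Nat.le_succ i)
        have huT : u ∈ Icc τ T := hIccsub hu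
        have hvT : v ∈ Icc τ T := hIccsub hv
        have hD : H v - H u < ε' := by
          have hvu : v - u = c := by rw [hu', hv']; exact hpdiff i
          have hd : dist u v < δ := by
            rw [Real.dist_eq, abs_sub_comm, hvu, abs_of_pos hcpos]
            exact hcδ
          have h10 := hδ u hu v hv hd
          rw [Real.dist_eq] at h10
          have h11 := abs_lt.1 h10
          linarith [h11.1]
        have hDnn : 0 ≤ H v - H u := sub_nonneg.2 (hHmono huT hvT huv)
        have hBA : Z u ≤ Z v := hZmono huT hvT huv
        have hZvt : Z v ≤ Z t := hZmono hvT htI hv.2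
        have hAnn : 0 ≤ Z u := hZnn huT
        have hKle : k v ≤ k u := hkmono huT hvT huv
        have hK1 : k u ≤ 1 := hkle1 huT
        have hLpos : 0 < k v := hkpos v
        have hKpos : 0 < k u := hkpos u
        have hZuv : Z v - Z u = ∫ s in u..v, φ s := hZsub huT hvT huv
        have hfint : IntervalIntegrable f volume u v :=
          (hf_cont.mono (uIcc_subset_Icc huT hvT)).intervalIntegrable
        have hint2 : IntervalIntegrable (fun s => h s * Z v + f s) volume u v :=
          ((hh_ii huT hvT).mul_const _).add hfint
        have hmono1 : (∫ s in u..v, φ s) ≤ ∫ s in u..v, (h s * Z v + f s) := by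
          apply intervalIntegral.integral_mono_on huv (hφ_ii huT hvT) hint2
          intro s hs
          have hsT : s ∈ Icc τ T := ⟨huT.1.trans hs.1, hs.2.trans hvT.2⟩
          have h1 : Y s ≤ Z s := stepA s hsT
          have h2 : Z s ≤ Z v := hZmono hsT hvT hs.2
          have h3 := hh_nonneg s hsT
          simp only [hφdef]
          have h5 := mul_le_mul_of_nonneg_left (h1.trans h2) h3
          linarith
        have heq2 : (∫ s in u..v, (h s * Z v + f s))
            = (H v - H u) * Z v + ∫ s in u..v, f s := by
          rw [intervalIntegral.integral_add ((hh_ii huT hvT).mul_const _) hfint,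
            intervalIntegral.integral_mul_const, hHsub huT hvT]
        have h3 : k v * (∫ s in u..v, f s) ≤ ∫ s in u..v, f s * k s := by
          rw [← intervalIntegral.integral_const_mul]
          apply intervalIntegral.integral_mono_on huv (hfint.const_mul _) (hfk_ii huT hvT)
          intro s hs
          have hsT : s ∈ Icc τ T := ⟨huT.1.trans hs.1, hs.2.trans hvT.2⟩
          have h4 : k v ≤ k s := hkmono hsT hvT hs.2
          calc k v * f s = f s * k v := mul_comm _ _
            _ ≤ f s * k s := mul_le_mul_of_nonneg_left h4 (hf_nonneg s hsT)
        have hD2 : k v = k u * Real.exp (-(H v - H u)) := hkratio u v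
        have hexpq : Real.exp (-(H v - H u)) ≤ 1 - (H v - H u) + (H v - H u)^2 :=
          exp_neg_quad _ hDnn
        have e1 : k v * (Z v - Z u) ≤ Z v * k v * (H v - H u) + ∫ s in u..v, f s * k s := by
          have h5 : (∫ s in u..v, φ s) ≤ (H v - H u) * Z v + ∫ s in u..v, f s :=
            hmono1.trans_eq heq2
          have h6 := mul_le_mul_of_nonneg_left h5 hLpos.le
          rw [hZuv]
          linarith [h6, h3]
        have e2 : Z u * (k v - k u) ≤
            - (Z u * k u * (H v - H u)) + Z u * k u * (H v - H u)^2 := by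
          have hKnn : 0 ≤ Z u * k u := mul_nonneg hAnn hKpos.le
          calc Z u * (k v - k u) = Z u * k u * (Real.exp (-(H v - H u)) - 1) := by
                rw [hD2]; ring
            _ ≤ Z u * k u * ((1 - (H v - H u) + (H v - H u)^2) - 1) := by
                apply mul_le_mul_of_nonneg_left _ hKnn; linarith
            _ = - (Z u * k u * (H v - H u)) + Z u * k u * (H v - H u)^2 := by ring
        have hBnn : 0 ≤ Z v := hAnn.trans hBA
        have e3 : Z v * k v - Z u * k u ≤ Z v - Z u := by
          have a1 : Z v * k v ≤ Z v * k u := mul_le_mul_of_nonneg_left hKle hBnn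
          have a2 : (Z v - Z u) * k u ≤ (Z v - Z u) * 1 :=
            mul_le_mul_of_nonneg_left hK1 (by linarith)
          linarith [a1, a2]
        have e4 : Z v * k v * (H v - H u) - Z u * k u * (H v - H u) ≤ (Z v - Z u) * ε' := by
          have h7 : (Z v * k v - Z u * k u) * (H v - H u) ≤ (Z v - Z u) * (H v - H u) :=
            mul_le_mul_of_nonneg_right e3 hDnn
          have h8 : (Z v - Z u) * (H v - H u) ≤ (Z v - Z u) * ε' :=
            mul_le_mul_of_nonneg_left hD.le (by linarith)
          linarith [h7, h8]
        have e5 : Z u * k u * (H v - H u)^2 ≤ Z t * ε' * (H v - H u) := by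
          have h9 : Z u * k u ≤ Z t := by
            have := mul_le_mul_of_nonneg_left hK1 hAnn
            linarith [hBA, hZvt]
          have h10 : (H v - H u)^2 ≤ ε' * (H v - H u) := by
            rw [sq]
            exact mul_le_mul_of_nonneg_right hD.le hDnn
          have h11 : 0 ≤ Z u * k u := mul_nonneg hAnn hKpos.le
          have b1 := mul_le_mul_of_nonneg_left h10 h11
          have b2 := mul_le_mul_of_nonneg_right h9
            (mul_nonneg hε'pos.le hDnn)
          linarith [b1, b2]
        linarith [e1, e2, e4, e5]
      -- sum the per-interval estimates
      have sum_tele : ∑ i ∈ Finset.range n, (Z (p (i+1)) * k (p (i+1)) - Z (p i) * k (p i))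
          = Z t * k t - Z τ * k τ := by
        rw [Finset.sum_range_sub (fun i => Z (p i) * k (p i)) n, hp0, hpn]
      have sum_teleZ : ∑ i ∈ Finset.range n, (Z (p (i+1)) - Z (p i)) = Z t - Z τ := by
        rw [Finset.sum_range_sub (fun i => Z (p i)) n, hp0, hpn]
      have sum_teleH : ∑ i ∈ Finset.range n, (H (p (i+1)) - H (p i)) = H t - H τ := by
        rw [Finset.sum_range_sub (fun i => H (p i)) n, hp0, hpn]
      have sum_int : ∑ i ∈ Finset.range n, (∫ s in (p i)..(p (i+1)), f s * k s)
          = ∫ s in τ..t, f s * k s := by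
        rw [intervalIntegral.sum_integral_adjacent_intervals
          (fun i hi => hfk_ii (hIccsub (hpmem i hi.le)) (hIccsub (hpmem (i+1) hi)))]
        rw [hp0, hpn]
      have total := Finset.sum_le_sum (fun i (hi : i ∈ Finset.range n) =>
        step i (Finset.mem_range.1 hi))
      rw [sum_tele] at total
      have expand : ∑ i ∈ Finset.range n, ((∫ s in (p i)..(p (i+1)), f s * k s)
            + ε' * (Z (p (i+1)) - Z (p i)) + Z t * ε' * (H (p (i+1)) - H (p i)))
          = (∫ s in τ..t, f s * k s) + ε' * (Z t - Z τ) + Z t * ε' * (H t - H τ) := by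
        rw [Finset.sum_add_distrib, Finset.sum_add_distrib, ← Finset.mul_sum, ← Finset.mul_sum,
          sum_int, sum_teleZ, sum_teleH]
      rw [expand] at total
      have hkτ1 : k τ = 1 := by simp [hkdef, hHτ]
      rw [hkτ1, mul_one] at total
      have hεM : ε' * (Z t - Z τ) + Z t * ε' * (H t - H τ) ≤ ε := by
        have h1 : ε' * (Z t - Z τ) + Z t * ε' * (H t - H τ) = ε' * ((Z t - Z τ) + Z t * (H t - H τ)) := by ring
        have h2 : (Z t - Z τ) + Z t * (H t - H τ) ≤ M := by
          rw [hM, hHτ]; linarith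
        have h3 : ε' * ((Z t - Z τ) + Z t * (H t - H τ)) ≤ ε' * M :=
          mul_le_mul_of_nonneg_left h2 hε'pos.le
        have h4 : ε' * M = ε := by
          rw [hε']; field_simp
        linarith
      linarith
  -- Step C : conclusion
  have hYt : Y t ≤ Z t := stepA t htI
  set E : ℝ := Real.exp (H t - a*t) with hE
  have hEpos : 0 < E := Real.exp_pos _
  have step1 : y t ≤ E * (Y τ + ∫ s in τ..t, f s * k s) := by
    have h1 : y t = Real.exp (-(a*t)) * Y t := by
      simp only [hYdef]
      rw [← mul_assoc, ← Real.exp_add,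
        show -(a*t) + a*t = 0 from by ring, Real.exp_zero, one_mul]
    have h2 : Real.exp (-(a*t)) * Y t ≤ Real.exp (-(a*t)) * Z t :=
      mul_le_mul_of_nonneg_left hYt (Real.exp_pos _).le
    have h3 : Real.exp (-(a*t)) * Z t = E * (Z t * k t) := by
      simp only [hE, hkdef]
      rw [show Real.exp (H t - a*t) * (Z t * Real.exp (-(H t)))
          = (Real.exp (H t - a*t) * Real.exp (-(H t))) * Z t from by ring,
        ← Real.exp_add, show H t - a*t + -(H t) = -(a*t) from by ring]
    have h4 : E * (Z t * k t) ≤ E * (Z τ + ∫ s in τ..t, f s * k s) :=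
      mul_le_mul_of_nonneg_left key hEpos.le
    rw [hZτ] at h4
    calc y t = Real.exp (-(a*t)) * Y t := h1
      _ ≤ Real.exp (-(a*t)) * Z t := h2
      _ = E * (Z t * k t) := h3
      _ ≤ E * (Y τ + ∫ s in τ..t, f s * k s) := h4
  have hHt : H t ≤ ξ*(t-τ) + Cξ := by
    have h0 : H t - H τ = ∫ s in τ..t, h s := hHsub hττ htI
    rw [hHτ] at h0
    have h5 := hh_bound τ t le_rfl ht.1 ht.2
    linarith
  have hi1 : E * Y τ ≤ Real.exp Cξ * (Real.exp (-(a-ξ)*(t-τ)) * y τ) := by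
    have hyτ : 0 ≤ y τ := hy_nonneg τ hττ
    have hEY : E * Y τ = Real.exp (H t - a*t + a*τ) * y τ := by
      simp only [hE, hYdef]
      rw [← mul_assoc, ← Real.exp_add]
    have hle : Real.exp (H t - a*t + a*τ) ≤ Real.exp (Cξ + (-(a-ξ)*(t-τ))) :=
      Real.exp_le_exp.2 (by linarith [hHt])
    have h6 := mul_le_mul_of_nonneg_right hle hyτ
    rw [show Real.exp (Cξ + (-(a-ξ)*(t-τ)))
        = Real.exp Cξ * Real.exp (-(a-ξ)*(t-τ)) from Real.exp_add _ _] at h6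
    rw [hEY]
    linarith [h6]
  have hi2 : E * (∫ s in τ..t, f s * k s)
      ≤ Real.exp Cξ * ∫ s in τ..t, Real.exp (-(a-ξ)*(t-s)) * F s := by
    have hcomb : ∀ s : ℝ, E * (f s * k s)
        = Real.exp (H t - H s - a*(t-s)) * F s := by
      intro s
      simp only [hE, hfdef, hkdef]
      rw [show H t - H s - a*(t-s) = (H t - a*t) + (a*s + -(H s)) from by ring,
        Real.exp_add, Real.exp_add]
      ring
    have hcont2 : ContinuousOn
        (fun s => Real.exp Cξ * (Real.exp (-(a-ξ)*(t-s)) * F s)) (Icc τ t) := by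
      apply ContinuousOn.mul continuousOn_const
      apply ContinuousOn.mul _ (hF_cont.mono hIccsub)
      exact (Real.continuous_exp.comp (by continuity)).continuousOn
    rw [← intervalIntegral.integral_const_mul, ← intervalIntegral.integral_const_mul]
    apply intervalIntegral.integral_mono_on ht.1 ((hfk_ii hττ htI).const_mul E)
      (hcont2.intervalIntegrable_of_Icc ht.1)
    intro s hs
    have hsT : s ∈ Icc τ T := hIccsub hs
    have hHts : H t - H s ≤ ξ*(t-s) + Cξ := by
      have h0 : H t - H s = ∫ r in s..t, h r := hHsub hsT htI
      have h7 := hh_bound s t hsT.1 hs.2 htI.2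
      linarith
    have hexple : Real.exp (H t - H s - a*(t-s)) ≤ Real.exp (Cξ + (-(a-ξ)*(t-s))) :=
      Real.exp_le_exp.2 (by linarith [hHts])
    rw [hcomb s]
    have h8 := mul_le_mul_of_nonneg_right hexple (hF_nonneg s hsT)
    rw [Real.exp_add] at h8
    linarith [h8]
  calc y t ≤ E * (Y τ + ∫ s in τ..t, f s * k s) := step1
    _ = E * Y τ + E * ∫ s in τ..t, f s * k s := by ring
    _ ≤ Real.exp Cξ * (Real.exp (-(a-ξ)*(t-τ)) * y τ)
        + Real.exp Cξ * ∫ s in τ..t, Real.exp (-(a-ξ)*(t-s)) * F s := add_le_add hi1 hi2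
    _ = Real.exp Cξ * (Real.exp (-(a-ξ)*(t-τ)) * y τ
        + ∫ s in τ..t, Real.exp (-(a-ξ)*(t-s)) * F s) := by ring
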